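/- Let α ∈ (0,∞) and for p ∈ (0,1) let Z_p be the geometric probability mass function on ℤ given by Z_p(n) = p(1−p)^n for n ≥ 0 and Z_p(n) = 0 for n < 0. Then lim_{p→0⁺} (H_α(Z_p) − H_∞(Z_p)) = log(α^{1/(α−1)}), where for α = 1 the right-hand side is interpreted as 1. -/

import Mathlib

open Real Filter

/-- Rényi entropy of order `α > 0` (Shannon entropy at `α = 1`), natural logarithm. -/
noncomputable def renyiEnt (α : ℝ) (p : ℤ → ℝ) : ℝ :=
  if α = 1 then -∑' n, p n * Real.log (p n)
  else (1 - α)⁻¹ * Real.log (∑' n, p n ^ α)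

/-- Min-entropy `H_∞(p) = −log sup_n p(n)`. -/
noncomputable def minEnt (p : ℤ → ℝ) : ℝ := -Real.log (⨆ n, p n)

/-- The geometric pmf on `ℤ` with parameter `p`:
`Z_p(n) = p(1−p)ⁿ` for `n ≥ 0` and `0` otherwise. -/
noncomputable def geomPMF (p : ℝ) : ℤ → ℝ :=
  fun n => if 0 ≤ n then p * (1 - p) ^ n.toNat else 0

lemma tsum_int_nonneg_support (f : ℤ → ℝ) (hf : ∀ n : ℤ, n < 0 → f n = 0) :
    ∑' n : ℤ, f n = ∑' n : ℕ, f (n : ℤ) := by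
  refine (Function.Injective.tsum_eq (g := (Nat.cast : ℕ → ℤ)) Nat.cast_injective ?_).symm
  intro n hn
  rcases le_or_gt 0 n with h | h
  · exact ⟨n.toNat, by simp [Int.toNat_of_nonneg h]⟩
  · exact absurd (hf n h) hn

lemma geomPMF_natCast (p : ℝ) (n : ℕ) : geomPMF p (n : ℤ) = p * (1 - p) ^ n := by
  simp [geomPMF, Int.toNat_natCast]

lemma geomPMF_le {p : ℝ} (h0 : 0 < p) (h1 : p < 1) (n : ℤ) : geomPMF p n ≤ p := by
  unfold geomPMF
  split
  · exact mul_le_of_le_one_right h0.le (pow_le_one₀ (by linarith) (by linarith))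
  · exact h0.le

lemma sup_geomPMF {p : ℝ} (h0 : 0 < p) (h1 : p < 1) : (⨆ n, geomPMF p n) = p := by
  apply le_antisymm
  · exact ciSup_le (geomPMF_le h0 h1)
  · have hb : BddAbove (Set.range (geomPMF p)) :=
      ⟨p, by rintro x ⟨n, rfl⟩; exact geomPMF_le h0 h1 n⟩
    have := le_ciSup hb (0 : ℤ)
    rw [show geomPMF p 0 = p by simp [geomPMF]] at this
    exact this

lemma renyi_sum {α p : ℝ} (hα : 0 < α) (h0 : 0 < p) (h1 : p < 1) :
    ∑' n : ℤ, geomPMF p n ^ α = p ^ α * (1 - (1 - p) ^ α)⁻¹ := by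
  have hq0 : (0:ℝ) ≤ 1 - p := by linarith
  have hq1 : (1:ℝ) - p < 1 := by linarith
  rw [tsum_int_nonneg_support _ (fun n hn => by
    simp only [geomPMF, if_neg (not_le.mpr hn)]
    exact Real.zero_rpow hα.ne')]
  have key : ∀ n : ℕ, geomPMF p (n : ℤ) ^ α = p ^ α * ((1 - p) ^ α) ^ n := by
    intro n
    rw [geomPMF_natCast, Real.mul_rpow h0.le (pow_nonneg hq0 n)]
    congr 1
    rw [← Real.rpow_natCast (1-p) n, ← Real.rpow_natCast ((1-p)^α) n,
      ← Real.rpow_mul hq0, ← Real.rpow_mul hq0, mul_comm]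
  simp_rw [key]
  rw [tsum_mul_left, tsum_geometric_of_lt_one (Real.rpow_nonneg hq0 α)
    (Real.rpow_lt_one hq0 hq1 hα)]

lemma shannon_sum {p : ℝ} (h0 : 0 < p) (h1 : p < 1) :
    ∑' n : ℤ, geomPMF p n * Real.log (geomPMF p n)
      = Real.log p + (1 - p) * Real.log (1 - p) / p := by
  have hq0 : (0:ℝ) < 1 - p := by linarith
  have hq1 : (1:ℝ) - p < 1 := by linarith
  rw [tsum_int_nonneg_support _ (fun n hn => by
    simp [geomPMF, if_neg (not_le.mpr hn)])]
  have key : ∀ n : ℕ, geomPMF p (n:ℤ) * Real.log (geomPMF p (n:ℤ))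
      = (Real.log p * p) * (1-p) ^ n + (p * Real.log (1-p)) * ((n:ℝ) * (1-p) ^ n) := by
    intro n
    rw [geomPMF_natCast, Real.log_mul h0.ne' (pow_ne_zero n hq0.ne'), Real.log_pow]
    ring
  simp_rw [key]
  have hs1 : Summable (fun n : ℕ => (Real.log p * p) * (1-p) ^ n) :=
    (summable_geometric_of_lt_one hq0.le hq1).mul_left _
  have hs2 : Summable (fun n : ℕ => (p * Real.log (1-p)) * ((n:ℝ) * (1-p) ^ n)) := by
    apply Summable.mul_left
    have := summable_pow_mul_geometric_of_norm_lt_one (R := ℝ) 1 (r := 1-p)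
      (by rw [Real.norm_eq_abs, abs_of_nonneg hq0.le]; exact hq1)
    simpa using this
  rw [Summable.tsum_add hs1 hs2, tsum_mul_left, tsum_mul_left,
    tsum_geometric_of_lt_one hq0.le hq1,
    tsum_coe_mul_geometric_of_norm_lt_one
      (by rw [Real.norm_eq_abs, abs_of_nonneg hq0.le]; exact hq1)]
  have hp' : (1:ℝ) - (1 - p) = p := by ring
  rw [hp']
  field_simp

lemma tendsto_aux1 {α : ℝ} (hα : 0 < α) :
    Tendsto (fun x : ℝ => (1 - (1-x) ^ α) / x) (nhdsWithin 0 (Set.Ioi 0)) (nhds α) := by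
  have hd : HasDerivAt (fun x : ℝ => (1-x) ^ α) (-α) 0 := by
    have h1 : HasDerivAt (fun x : ℝ => 1 - x) (-1) 0 := (hasDerivAt_id 0).const_sub 1
    have h2 := HasDerivAt.rpow_const (p := α) h1 (by norm_num)
    simpa using h2
  have hslope := hasDerivAt_iff_tendsto_slope.mp hd
  have hmono : nhdsWithin (0:ℝ) (Set.Ioi 0) ≤ nhdsWithin 0 {(0:ℝ)}ᶜ :=
    nhdsWithin_mono 0 (fun x hx => ne_of_gt hx)
  have := (hslope.mono_left hmono).neg
  rw [neg_neg] at this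
  refine this.congr (fun x => ?_)
  rw [slope_def_field]
  simp only [sub_zero, Real.one_rpow]
  ring

lemma tendsto_aux2 :
    Tendsto (fun x : ℝ => -((1-x) * Real.log (1-x) / x)) (nhdsWithin 0 (Set.Ioi 0)) (nhds 1) := by
  have hd : HasDerivAt (fun x : ℝ => Real.log (1-x)) (-1) 0 := by
    have h1 : HasDerivAt (fun x : ℝ => 1 - x) (-1) 0 := (hasDerivAt_id 0).const_sub 1
    have h2 := HasDerivAt.log h1 (by norm_num)
    simpa using h2
  have hslope := hasDerivAt_iff_tendsto_slope.mp hd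
  have hmono : nhdsWithin (0:ℝ) (Set.Ioi 0) ≤ nhdsWithin 0 {(0:ℝ)}ᶜ :=
    nhdsWithin_mono 0 (fun x hx => ne_of_gt hx)
  have hL : Tendsto (fun x : ℝ => -(Real.log (1-x) / x)) (nhdsWithin 0 (Set.Ioi 0)) (nhds 1) := by
    have := (hslope.mono_left hmono).neg
    rw [neg_neg] at this
    refine this.congr (fun x => ?_)
    rw [slope_def_field]
    simp
  have hC : Tendsto (fun x : ℝ => 1 - x) (nhdsWithin 0 (Set.Ioi 0)) (nhds 1) := by
    have h : Tendsto (fun x : ℝ => 1 - x) (nhds 0) (nhds 1) := by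
      have := (tendsto_const_nhds (x := (1:ℝ)) (f := nhds (0:ℝ))).sub tendsto_id
      simpa using this
    exact h.mono_left nhdsWithin_le_nhds
  have := hC.mul hL
  rw [mul_one] at this
  refine this.congr (fun x => ?_)
  ring

/-- For `α ∈ (0,∞)`, `lim_{p→0⁺} (H_α(Z_p) − H_∞(Z_p)) = log(α^{1/(α−1)})`,
the right side read as `1` when `α = 1`. -/
theorem geometric_limit_renyi_minEntropy_gap (α : ℝ) (hα : 0 < α) :
    Tendsto (fun p : ℝ => renyiEnt α (geomPMF p) - minEnt (geomPMF p))
      (nhdsWithin 0 (Set.Ioi 0))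
      (nhds (if α = 1 then 1 else Real.log α / (α - 1))) := by
  have hmem : Set.Ioo (0:ℝ) 1 ∈ nhdsWithin (0:ℝ) (Set.Ioi 0) :=
    Ioo_mem_nhdsGT_of_mem ⟨le_refl 0, one_pos⟩
  by_cases h1 : α = 1
  · subst h1
    rw [if_pos rfl]
    apply Tendsto.congr' _ tendsto_aux2
    filter_upwards [hmem] with p hp
    obtain ⟨hp0, hp1⟩ := hp
    rw [renyiEnt, if_pos rfl, minEnt, sup_geomPMF hp0 hp1, shannon_sum hp0 hp1]
    ring
  · rw [if_neg h1]
    have hα1 : α - 1 ≠ 0 := fun h => h1 (by linarith [sub_eq_zero.mp h])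
    have h1α : (1:ℝ) - α ≠ 0 := fun h => h1 (by linarith [sub_eq_zero.mp h])
    have hU := tendsto_aux1 hα
    have hlog : Tendsto (fun p : ℝ => Real.log ((1 - (1-p) ^ α) / p))
        (nhdsWithin 0 (Set.Ioi 0)) (nhds (Real.log α)) :=
      ((Real.continuousAt_log hα.ne').tendsto.comp hU)
    have hmain := (hlog.neg).const_mul ((1-α)⁻¹)
    have hval : (1-α)⁻¹ * (-Real.log α) = Real.log α / (α - 1) := by
      field_simp
      ring
    rw [hval] at hmain
    apply Tendsto.congr' _ hmain
    filter_upwards [hmem] with p hp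
    obtain ⟨hp0, hp1⟩ := hp
    have hq0 : (0:ℝ) ≤ 1 - p := by linarith
    have hq1 : (1:ℝ) - p < 1 := by linarith
    have hA : (0:ℝ) < 1 - (1-p) ^ α := sub_pos.mpr (Real.rpow_lt_one hq0 hq1 hα)
    rw [renyiEnt, if_neg h1, minEnt, sup_geomPMF hp0 hp1, renyi_sum hα hp0 hp1,
      Real.log_div hA.ne' hp0.ne',
      Real.log_mul (Real.rpow_pos_of_pos hp0 α).ne' (inv_ne_zero hA.ne'),
      Real.log_rpow hp0, Real.log_inv]
    field_simp
    ring
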